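/- Let R be a finite commutative ring of characteristic p with Jacobson radical J, J² = {0}, and with the notation S = F₁ ⊕ ⋯ ⊕ F_n, Λ₂ = {i : dim_{F_i} e_iJ ≥ 2} nonempty. Then the minimal number of proper R-subideals of J whose union is J equals min_{i ∈ Λ₂} |F_i| + 1. -/

import Mathlib

/-- A cover of the ideal `J` by proper subideals of `R`. -/
def IsSubidealCover {R : Type*} [CommRing R] (J : Ideal R) (C : Finset (Ideal R)) : Prop :=
  (∀ I ∈ C, I ≤ J ∧ I ≠ J) ∧ ∀ x ∈ J, ∃ I ∈ C, x ∈ I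

/-- The condition `i ∈ Λ₂`, i.e. `dim_{F i} (e i J) ≥ 2`: there are two elements of
`e i J` neither of which is a scalar multiple of the other. -/
def Lam2Cond {R : Type*} [CommRing R] (S : Subring R) (J : Ideal R) (e : R) : Prop :=
  ∃ x y : R, x ∈ J ∧ y ∈ J ∧ e * x = x ∧ e * y = y ∧
    (∀ s ∈ S, y ≠ s * x) ∧ (∀ s ∈ S, x ≠ s * y)


/-- Auxiliary data: a "scalar embedding" of a field `K` into `R` relative to an ideal `J`. -/
structure ScalarData (R : Type*) [CommRing R] (K : Type*) [Field K] (J : Ideal R) where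
  σ : K → R
  map_add : ∀ a b, σ (a + b) = σ a + σ b
  map_mul : ∀ a b, σ (a * b) = σ a * σ b
  compat : ∀ r z : R, z ∈ J → ∃ a : K, σ 1 * (r * z) = σ a * (σ 1 * z)

namespace ScalarData

variable {R : Type*} [CommRing R] {K : Type*} [Field K] {J : Ideal R} (d : ScalarData R K J)

theorem map_zero : d.σ 0 = 0 := by
  have h := d.map_add 0 0
  simp only [add_zero] at h
  exact (left_eq_add.mp h)

theorem one_mul_σ (a : K) : d.σ 1 * d.σ a = d.σ a := by
  rw [← d.map_mul, one_mul]

theorem idem : d.σ 1 * d.σ 1 = d.σ 1 := d.one_mul_σ 1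

/-- The component `{z ∈ J | e z = z}` as an additive subgroup. -/
def Vgrp : AddSubgroup R where
  carrier := {z | z ∈ J ∧ d.σ 1 * z = z}
  add_mem' := by
    rintro a b ⟨haJ, ha⟩ ⟨hbJ, hb⟩
    exact ⟨J.add_mem haJ hbJ, by rw [mul_add, ha, hb]⟩
  zero_mem' := ⟨J.zero_mem, by rw [mul_zero]⟩
  neg_mem' := by
    rintro a ⟨haJ, ha⟩
    exact ⟨J.neg_mem haJ, by rw [mul_neg, ha]⟩

instance : SMul K d.Vgrp :=
  ⟨fun a z => ⟨d.σ a * ↑z, J.mul_mem_left _ z.2.1, by rw [← mul_assoc, d.one_mul_σ]⟩⟩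

@[simp] theorem coe_smul (a : K) (z : d.Vgrp) : ((a • z : d.Vgrp) : R) = d.σ a * ↑z := rfl

instance : Module K d.Vgrp where
  one_smul z := Subtype.ext (by rw [coe_smul, z.2.2])
  mul_smul a b z := Subtype.ext (by simp [d.map_mul, mul_assoc])
  smul_zero a := Subtype.ext (by simp)
  smul_add a z w := Subtype.ext (by simp [mul_add])
  add_smul a b z := Subtype.ext (by simp [d.map_add, add_mul])
  zero_smul z := Subtype.ext (by simp [d.map_zero])

/-- Projection of an element of `J` to the component. -/
def theta (z : R) (hz : z ∈ J) : d.Vgrp :=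
  ⟨d.σ 1 * z, J.mul_mem_left _ hz, by rw [← mul_assoc, d.idem]⟩

@[simp] theorem coe_theta (z : R) (hz : z ∈ J) : (d.theta z hz : R) = d.σ 1 * z := rfl

theorem theta_eq_self (z : d.Vgrp) : d.theta ↑z z.2.1 = z :=
  Subtype.ext z.2.2

/-- The ideal of `R` corresponding to a submodule of the component. -/
def phi (W : Submodule K d.Vgrp) : Ideal R where
  carrier := {z | ∃ hz : z ∈ J, d.theta z hz ∈ W}
  zero_mem' := ⟨J.zero_mem, by
    have : d.theta 0 J.zero_mem = 0 := Subtype.ext (by simp)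
    rw [this]; exact W.zero_mem⟩
  add_mem' := by
    rintro a b ⟨haJ, ha⟩ ⟨hbJ, hb⟩
    refine ⟨J.add_mem haJ hbJ, ?_⟩
    have : d.theta (a + b) (J.add_mem haJ hbJ) = d.theta a haJ + d.theta b hbJ :=
      Subtype.ext (by simp [mul_add])
    rw [this]; exact W.add_mem ha hb
  smul_mem' := by
    rintro r z ⟨hzJ, hz⟩
    have hrz : r * z ∈ J := J.mul_mem_left r hzJ
    refine ⟨by simpa using hrz, ?_⟩
    obtain ⟨a, ha⟩ := d.compat r z hzJ
    have : d.theta (r • z) (by simpa using hrz) = a • d.theta z hzJ :=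
      Subtype.ext (by simpa using ha)
    rw [this]; exact W.smul_mem a hz

theorem mem_phi {W : Submodule K d.Vgrp} {z : R} :
    z ∈ d.phi W ↔ ∃ hz : z ∈ J, d.theta z hz ∈ W := Iff.rfl

theorem phi_le : ∀ W : Submodule K d.Vgrp, d.phi W ≤ J := by
  rintro W z ⟨hz, -⟩; exact hz

theorem coe_mem_phi (W : Submodule K d.Vgrp) (v : d.Vgrp) : (v : R) ∈ d.phi W ↔ v ∈ W := by
  rw [mem_phi]
  constructor
  · rintro ⟨hz, h⟩
    rwa [show d.theta ↑v hz = v from Subtype.ext v.2.2] at h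
  · intro h
    exact ⟨v.2.1, by rwa [d.theta_eq_self]⟩

theorem phi_injective : Function.Injective (d.phi (K := K)) := by
  intro W₁ W₂ h
  ext v
  rw [← d.coe_mem_phi W₁ v, ← d.coe_mem_phi W₂ v, h]

theorem phi_ne (W : Submodule K d.Vgrp) (hW : W ≠ ⊤) : d.phi W ≠ J := by
  intro hEq
  apply hW
  ext v
  simp only [Submodule.mem_top, iff_true]
  rw [← d.coe_mem_phi W v, hEq]
  exact v.2.1

/-- The submodule of the component corresponding to an ideal of `R`. -/
def psi (I : Ideal R) : Submodule K d.Vgrp where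
  carrier := {v | (v : R) ∈ I}
  zero_mem' := I.zero_mem
  add_mem' := fun ha hb => I.add_mem ha hb
  smul_mem' := fun a v hv => by
    show (d.σ a * ↑v) ∈ I
    exact I.mul_mem_left _ hv

theorem mem_psi {I : Ideal R} {v : d.Vgrp} : v ∈ d.psi (K := K) I ↔ (v : R) ∈ I := Iff.rfl

end ScalarData

/-- A finite vector space over a finite field `K` cannot be covered by at most `|K|`
proper subspaces. -/
theorem lemA {K V : Type*} [Field K] [Fintype K] [AddCommGroup V] [Module K V] [Finite V]
    (C : Finset (Submodule K V)) (hC : ∀ W ∈ C, W ≠ ⊤) (hcard : C.card ≤ Fintype.card K) :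
    ∃ v : V, ∀ W ∈ C, v ∉ W := by
  classical
  by_contra hcov
  push_neg at hcov
  obtain ⟨W₀, hW₀C, -⟩ := hcov 0
  letI : Fintype V := Fintype.ofFinite V
  set q := Fintype.card K with hq
  have hq2 : 2 ≤ q := Fintype.one_lt_card
  -- each proper subspace W satisfies q * |W| ≤ |V|
  have key : ∀ W ∈ C, q * Fintype.card W ≤ Fintype.card V := by
    intro W hW
    have hWne := hC W hW
    have : ∃ u : V, u ∉ W := by
      by_contra h
      push_neg at h
      exact hWne (by ext x; simpa using h x)
    obtain ⟨u, hu⟩ := this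
    have hinj : Function.Injective (fun p : K × W => p.1 • u + (p.2 : V)) := by
      rintro ⟨a, w⟩ ⟨b, w'⟩ hab
      simp only [Prod.mk.injEq] at hab ⊢
      have h1 : (a - b) • u = (w' : V) - w := by
        rw [sub_smul]
        have := hab
        linear_combination (norm := module) this
      have hab2 : a = b := by
        by_contra hne
        apply hu
        have : u = (a - b)⁻¹ • ((w' : V) - w) := by
          rw [← h1, smul_smul, inv_mul_cancel₀ (sub_ne_zero.mpr hne), one_smul]
        rw [this]
        exact W.smul_mem _ (W.sub_mem w'.2 w.2)
      refine ⟨hab2, ?_⟩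
      have hww : (w : V) = (w' : V) := by
        have h7 := hab
        rw [hab2] at h7
        exact add_left_cancel h7
      exact Subtype.ext hww
    calc q * Fintype.card W = Fintype.card (K × W) := (Fintype.card_prod _ _).symm
      _ ≤ Fintype.card V := Fintype.card_le_of_injective _ hinj
  have hVq : q ≤ Fintype.card V := by
    have h1 : 1 ≤ Fintype.card W₀ := Fintype.card_pos
    calc q = q * 1 := (mul_one q).symm
      _ ≤ q * Fintype.card W₀ := Nat.mul_le_mul_left q h1
      _ ≤ Fintype.card V := key W₀ hW₀C
  -- the union counting
  set t : Submodule K V → Finset V := fun W => (W : Set V).toFinset.erase 0 with ht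
  have hsub : (Finset.univ.erase (0 : V)) ⊆ C.biUnion t := by
    intro v hv
    rw [Finset.mem_erase] at hv
    obtain ⟨W, hWC, hvW⟩ := hcov v
    rw [Finset.mem_biUnion]
    exact ⟨W, hWC, Finset.mem_erase.mpr ⟨hv.1, by simpa using hvW⟩⟩
  have htcard : ∀ W ∈ C, (t W).card = Fintype.card W - 1 := by
    intro W _
    rw [ht]
    simp only
    rw [Finset.card_erase_of_mem (by simp), Set.toFinset_card]
    congr 1
  have h2 : Fintype.card V - 1 ≤ ∑ W ∈ C, (Fintype.card W - 1) := by
    calc Fintype.card V - 1 = (Finset.univ.erase (0 : V)).card := by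
          rw [Finset.card_erase_of_mem (Finset.mem_univ _), Finset.card_univ]
      _ ≤ (C.biUnion t).card := Finset.card_le_card hsub
      _ ≤ ∑ W ∈ C, (t W).card := Finset.card_biUnion_le
      _ = ∑ W ∈ C, (Fintype.card W - 1) := Finset.sum_congr rfl htcard
  have h3 : q * (Fintype.card V - 1) ≤ q * (Fintype.card V - q) := by
    calc q * (Fintype.card V - 1) ≤ q * ∑ W ∈ C, (Fintype.card W - 1) :=
          Nat.mul_le_mul_left q h2
      _ = ∑ W ∈ C, q * (Fintype.card W - 1) := Finset.mul_sum _ _ _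
      _ ≤ ∑ W ∈ C, (Fintype.card V - q) := by
          refine Finset.sum_le_sum fun W hW => ?_
          have h4 := key W hW
          have h5 : 1 ≤ Fintype.card W := Fintype.card_pos
          have : q * (Fintype.card W - 1) = q * Fintype.card W - q := by
            rw [Nat.mul_sub, mul_one]
          omega
      _ = C.card * (Fintype.card V - q) := by rw [Finset.sum_const, smul_eq_mul]
      _ ≤ q * (Fintype.card V - q) := Nat.mul_le_mul_right _ hcard
  have h6 : Fintype.card V - 1 ≤ Fintype.card V - q :=
    Nat.le_of_mul_le_mul_left h3 (by omega)
  omega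

/-- If a vector space over a finite field `K` contains two linearly independent vectors,
then it can be covered by `|K| + 1` proper subspaces. -/
theorem lemB {K V : Type*} [Field K] [Fintype K] [AddCommGroup V] [Module K V]
    (x y : V) (hli : LinearIndependent K ![x, y]) :
    ∃ C : Finset (Submodule K V), (∀ W ∈ C, W ≠ ⊤) ∧ (∀ v : V, ∃ W ∈ C, v ∈ W) ∧
      C.card = Fintype.card K + 1 := by
  classical
  set P := Submodule.span K (Set.range ![x, y]) with hP
  have hxP : x ∈ P := Submodule.subset_span ⟨0, rfl⟩
  have hyP : y ∈ P := Submodule.subset_span ⟨1, rfl⟩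
  set b : Module.Basis (Fin 2) K P := Module.Basis.span hli with hb
  have hb0 : b 0 = ⟨x, hxP⟩ := Subtype.ext (by rw [hb, Module.Basis.span_apply]; rfl)
  have hb1 : b 1 = ⟨y, hyP⟩ := Subtype.ext (by rw [hb, Module.Basis.span_apply]; rfl)
  obtain ⟨Q, hQ⟩ := Submodule.exists_isCompl P
  set π := P.linearProjOfIsCompl Q hQ with hπ
  set fx : V →ₗ[K] K := (b.coord 0).comp π with hfx
  set fy : V →ₗ[K] K := (b.coord 1).comp π with hfy
  have hπx : π x = ⟨x, hxP⟩ := P.linearProjOfIsCompl_apply_left hQ ⟨x, hxP⟩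
  have hπy : π y = ⟨y, hyP⟩ := P.linearProjOfIsCompl_apply_left hQ ⟨y, hyP⟩
  have hfxx : fx x = 1 := by
    rw [hfx]; simp only [LinearMap.comp_apply]; rw [hπx, ← hb0, Module.Basis.coord_apply,
      Module.Basis.repr_self]; simp
  have hfxy : fx y = 0 := by
    rw [hfx]; simp only [LinearMap.comp_apply]; rw [hπy, ← hb1, Module.Basis.coord_apply,
      Module.Basis.repr_self]; simp
  have hfyx : fy x = 0 := by
    rw [hfy]; simp only [LinearMap.comp_apply]; rw [hπx, ← hb0, Module.Basis.coord_apply,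
      Module.Basis.repr_self]; simp
  have hfyy : fy y = 1 := by
    rw [hfy]; simp only [LinearMap.comp_apply]; rw [hπy, ← hb1, Module.Basis.coord_apply,
      Module.Basis.repr_self]; simp
  set f : K → (V →ₗ[K] K) := fun a => fy - a • fx with hf
  have hfav : ∀ a v, f a v = fy v - a * fx v := by intro a v; simp [hf]
  refine ⟨insert (LinearMap.ker fx) ((Finset.univ : Finset K).image fun a => LinearMap.ker (f a)),
    ?_, ?_, ?_⟩
  · intro W hW
    rcases Finset.mem_insert.mp hW with h | h
    · subst h
      intro htop
      have : x ∈ LinearMap.ker fx := htop ▸ Submodule.mem_top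
      rw [LinearMap.mem_ker, hfxx] at this
      exact one_ne_zero this
    · obtain ⟨a, -, rfl⟩ := Finset.mem_image.mp h
      intro htop
      have : y ∈ LinearMap.ker (f a) := htop ▸ Submodule.mem_top
      rw [LinearMap.mem_ker, hfav, hfyy, hfxy, mul_zero, sub_zero] at this
      exact one_ne_zero this
  · intro v
    by_cases hv : fx v = 0
    · exact ⟨LinearMap.ker fx, Finset.mem_insert_self _ _, hv⟩
    · refine ⟨LinearMap.ker (f (fy v * (fx v)⁻¹)), Finset.mem_insert_of_mem
        (Finset.mem_image.mpr ⟨_, Finset.mem_univ _, rfl⟩), ?_⟩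
      rw [LinearMap.mem_ker, hfav]
      field_simp
      simp
  · have hker : ∀ a : K, x + a • y ∈ LinearMap.ker (f a) := by
      intro a
      rw [LinearMap.mem_ker, hfav]
      simp [hfxx, hfxy, hfyx, hfyy]
    have hinj : Function.Injective fun a : K => LinearMap.ker (f a) := by
      intro a b hab
      simp only at hab
      have h1 : x + a • y ∈ LinearMap.ker (f b) := by rw [← hab]; exact hker a
      rw [LinearMap.mem_ker, hfav] at h1
      simp only [map_add, map_smul, hfxx, hfxy, hfyx, hfyy, smul_eq_mul,
        mul_zero, mul_one, add_zero, zero_add] at h1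
      exact sub_eq_zero.mp h1
    rw [Finset.card_insert_of_notMem, Finset.card_image_of_injective _ hinj, Finset.card_univ]
    intro hmem
    obtain ⟨a, -, ha⟩ := Finset.mem_image.mp hmem
    have h1 : y ∈ LinearMap.ker (f a) := by rw [ha]; exact LinearMap.mem_ker.mpr hfxy
    rw [LinearMap.mem_ker, hfav, hfyy, hfxy, mul_zero, sub_zero] at h1
    exact one_ne_zero h1

/-- If `Λ₂ ≠ ∅`, then the minimal number of proper `R`-subideals of `J` covering `J`
is `min_{i ∈ Λ₂} |F i| + 1`. -/
theorem stmt_13 {R : Type*} [CommRing R] [Finite R] (p : ℕ) (hp : p.Prime) [CharP R p]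
    (hJ2 : ∀ x ∈ Ideal.jacobson (⊥ : Ideal R), ∀ y ∈ Ideal.jacobson (⊥ : Ideal R), x * y = 0)
    (S : Subring R)
    (hdisj : ∀ x ∈ S, x ∈ Ideal.jacobson (⊥ : Ideal R) → x = 0)
    (hsum : ∀ r : R, ∃ s ∈ S, r - s ∈ Ideal.jacobson (⊥ : Ideal R))
    (n : ℕ) (F : Fin n → Type*) [∀ i, Field (F i)] [∀ i, Fintype (F i)]
    (iso : S ≃+* ∀ i, F i) (e : Fin n → R)
    (he : ∀ i, e i = (iso.symm (Pi.single i 1) : R))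
    (hLam2 : ∃ i, Lam2Cond S (Ideal.jacobson (⊥ : Ideal R)) (e i)) :
    IsLeast {k : ℕ | ∃ C : Finset (Ideal R),
        IsSubidealCover (Ideal.jacobson (⊥ : Ideal R)) C ∧ C.card = k}
      (sInf {c : ℕ | ∃ i, Lam2Cond S (Ideal.jacobson (⊥ : Ideal R)) (e i) ∧
        c = Fintype.card (F i)} + 1) := by
  classical
  set J := Ideal.jacobson (⊥ : Ideal R) with hJdef
  set σf : ∀ i : Fin n, F i → R := fun i a => ((iso.symm (Pi.single i a) : S) : R) with hσf
  have hσS : ∀ (i : Fin n) (a : F i), σf i a ∈ S := fun i a => SetLike.coe_mem _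
  have he' : ∀ i, e i = σf i 1 := he
  -- key commutation fact
  have hes0 : ∀ (i : Fin n) (s : S), σf i 1 * (s : R) = σf i (iso s i) := by
    intro i s
    have h1 : iso (iso.symm (Pi.single i 1) * s) = Pi.single i (iso s i) := by
      rw [map_mul, RingEquiv.apply_symm_apply]
      funext j
      by_cases h : j = i
      · subst h; simp [Pi.single_eq_same]
      · simp [Pi.single_eq_of_ne h]
    have h2 : iso.symm (Pi.single i 1) * s = iso.symm (Pi.single i (iso s i)) := by
      rw [← h1, RingEquiv.symm_apply_apply]
    calc σf i 1 * (s : R) = ((iso.symm (Pi.single i 1) * s : S) : R) := by push_cast; rfl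
      _ = σf i (iso s i) := by rw [h2]
  have haddσ : ∀ (i : Fin n) (a b : F i), σf i (a + b) = σf i a + σf i b := by
    intro i a b
    rw [hσf]
    simp only
    rw [Pi.single_add, map_add]
    push_cast; ring
  have hmulσ : ∀ (i : Fin n) (a b : F i), σf i (a * b) = σf i a * σf i b := by
    intro i a b
    rw [hσf]
    simp only
    rw [Pi.single_mul, map_mul]
    push_cast; ring
  -- scalar data for each component
  set d : ∀ i : Fin n, ScalarData R (F i) J := fun i =>
    { σ := σf i
      map_add := haddσ i
      map_mul := hmulσ i
      compat := by
        intro r z hz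
        obtain ⟨s, hsS, hrs⟩ := hsum r
        refine ⟨iso ⟨s, hsS⟩ i, ?_⟩
        have hz0 : (r - s) * z = 0 := hJ2 _ hrs _ hz
        have h1 : r * z = s * z + (r - s) * z := by ring
        rw [h1, hz0, add_zero, show σf i 1 * (s * z) = (σf i 1 * s) * z by ring,
          hes0 i ⟨s, hsS⟩, show σf i (iso ⟨s, hsS⟩ i) * (σf i 1 * z) =
            (σf i (iso ⟨s, hsS⟩ i) * σf i 1) * z by ring, ← hmulσ, mul_one] } with hd
  have hdσ : ∀ (i : Fin n) (a : F i), (d i).σ a = σf i a := fun i a => rfl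
  -- orthogonality
  have horth : ∀ i j : Fin n, i ≠ j → σf i 1 * σf j 1 = 0 := by
    intro i j hij
    have h1 : (Pi.single i 1 : ∀ k, F k) * Pi.single j 1 = 0 := by
      funext k
      by_cases h : k = i
      · subst h; simp [Pi.single_eq_of_ne hij]
      · simp [Pi.single_eq_of_ne h]
    calc σf i 1 * σf j 1 = ((iso.symm (Pi.single i 1) * iso.symm (Pi.single j 1) : S) : R) := by
          push_cast; rfl
      _ = ((iso.symm ((Pi.single i 1 : ∀ k, F k) * Pi.single j 1) : S) : R) := by rw [map_mul]
      _ = 0 := by rw [h1, map_zero]; rfl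
  -- sum of idempotents is 1
  have hsum1 : ∑ i : Fin n, σf i 1 = 1 := by
    have h1 : ∑ i : Fin n, (Pi.single i 1 : ∀ k, F k) = 1 := by
      have := Finset.univ_sum_single (1 : ∀ k, F k)
      simpa using this
    calc ∑ i : Fin n, σf i 1 = ((∑ i : Fin n, iso.symm (Pi.single i 1) : S) : R) := by
          rw [hσf]; push_cast; rfl
      _ = ((iso.symm (∑ i : Fin n, (Pi.single i 1 : ∀ k, F k)) : S) : R) := by rw [map_sum]
      _ = 1 := by rw [h1, map_one]; rfl
  have hdecomp : ∀ z : R, ∑ i : Fin n, σf i 1 * z = z := by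
    intro z
    rw [← Finset.sum_mul, hsum1, one_mul]
  have hidem : ∀ i : Fin n, σf i 1 * σf i 1 = σf i 1 := fun i => (d i).idem
  have hqle : ∀ i, Lam2Cond S J (e i) →
      sInf {c : ℕ | ∃ i, Lam2Cond S J (e i) ∧ c = Fintype.card (F i)} ≤ Fintype.card (F i) :=
    fun i h => Nat.sInf_le ⟨i, h, rfl⟩
  constructor
  · -- membership: there is a cover of size q + 1
    have hne : {c : ℕ | ∃ i, Lam2Cond S J (e i) ∧ c = Fintype.card (F i)}.Nonempty := by
      obtain ⟨i, hi⟩ := hLam2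
      exact ⟨Fintype.card (F i), i, hi, rfl⟩
    obtain ⟨i₀, hl₀, hc₀⟩ := Nat.sInf_mem hne
    obtain ⟨x, y, hxJ, hyJ, hex, hey, hyx, hxy⟩ := hl₀
    rw [he' i₀] at hex hey
    set x' : (d i₀).Vgrp := ⟨x, hxJ, hex⟩ with hx'
    set y' : (d i₀).Vgrp := ⟨y, hyJ, hey⟩ with hy'
    have hxne : x ≠ 0 := by
      intro h0
      exact hxy 0 S.zero_mem (by rw [h0, zero_mul])
    have hli : LinearIndependent (F i₀) ![x', y'] := by
      rw [LinearIndependent.pair_iff]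
      intro s t hst
      have hst' : σf i₀ s * x + σf i₀ t * y = 0 := congrArg Subtype.val hst
      by_cases ht : t = 0
      · subst ht
        have h0 : σf i₀ 0 = 0 := (d i₀).map_zero
        rw [h0, zero_mul, add_zero] at hst'
        refine ⟨?_, rfl⟩
        by_contra hs
        apply hxne
        calc x = σf i₀ 1 * x := hex.symm
          _ = σf i₀ (s⁻¹ * s) * x := by rw [inv_mul_cancel₀ hs]
          _ = σf i₀ s⁻¹ * (σf i₀ s * x) := by rw [hmulσ, mul_assoc]
          _ = 0 := by rw [hst', mul_zero]
      · exfalso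
        apply hyx (σf i₀ (-(t⁻¹ * s))) (hσS _ _)
        have hneg : ∀ a : F i₀, σf i₀ (-a) = - σf i₀ a := by
          intro a
          have := haddσ i₀ a (-a)
          rw [add_neg_cancel] at this
          have h0 : σf i₀ 0 = 0 := (d i₀).map_zero
          rw [h0] at this
          exact eq_neg_of_add_eq_zero_right this.symm
        have hty : σf i₀ t * y = -(σf i₀ s * x) := by linear_combination hst'
        calc y = σf i₀ 1 * y := hey.symm
          _ = σf i₀ (t⁻¹ * t) * y := by rw [inv_mul_cancel₀ ht]
          _ = σf i₀ t⁻¹ * (σf i₀ t * y) := by rw [hmulσ, mul_assoc]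
          _ = σf i₀ t⁻¹ * -(σf i₀ s * x) := by rw [hty]
          _ = -(σf i₀ (t⁻¹ * s)) * x := by rw [hmulσ]; ring
          _ = σf i₀ (-(t⁻¹ * s)) * x := by rw [hneg]
    obtain ⟨CV, hprop, hcov, hcard⟩ := lemB x' y' hli
    refine ⟨CV.image (d i₀).phi, ⟨?_, ?_⟩, ?_⟩
    · intro I hI
      obtain ⟨W, hW, rfl⟩ := Finset.mem_image.mp hI
      exact ⟨(d i₀).phi_le W, (d i₀).phi_ne W (hprop W hW)⟩
    · intro z hz
      obtain ⟨W, hW, hmem⟩ := hcov ((d i₀).theta z hz)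
      exact ⟨(d i₀).phi W, Finset.mem_image_of_mem _ hW, hz, hmem⟩
    · rw [Finset.card_image_of_injective _ (d i₀).phi_injective, hcard, hc₀]
  · -- lower bound
    rintro k ⟨C, ⟨hCprop, hCcov⟩, hCcard⟩
    by_contra hlt
    push_neg at hlt
    have hk : k ≤ sInf {c : ℕ | ∃ i, Lam2Cond S J (e i) ∧ c = Fintype.card (F i)} :=
      Nat.lt_succ_iff.mp hlt
    obtain ⟨i₁, -⟩ := hLam2
    haveI : Nonempty (Fin n) := ⟨i₁⟩
    -- choice of witnesses for each proper subideal
    have hwit : ∀ I : Ideal R, ∃ (i : Fin n) (w : R),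
        I ∈ C → (w ∈ J ∧ σf i 1 * w = w ∧ w ∉ I) := by
      intro I
      by_cases hI : I ∈ C
      · obtain ⟨hIJ, hIne⟩ := hCprop I hI
        obtain ⟨z, hzJ, hzI⟩ := SetLike.exists_of_lt (lt_of_le_of_ne hIJ hIne)
        have hni : ¬ ∀ i, σf i 1 * z ∈ I := by
          intro hall
          apply hzI
          rw [← hdecomp z]
          exact Ideal.sum_mem I (fun i _ => hall i)
        push_neg at hni
        obtain ⟨i, hi⟩ := hni
        exact ⟨i, σf i 1 * z, fun _ =>
          ⟨J.mul_mem_left _ hzJ, by rw [← mul_assoc, hidem], hi⟩⟩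
      · exact ⟨Classical.arbitrary _, 0, fun h => absurd h hI⟩
    choose idx w hw using hwit
    -- a good element in each component
    have key : ∀ i : Fin n, ∃ v : R, v ∈ J ∧ σf i 1 * v = v ∧
        ∀ I ∈ C, idx I = i → v ∉ I := by
      intro i
      by_cases hex2 : ∃ I ∈ C, idx I = i
      · by_cases hlam : Lam2Cond S J (e i)
        · -- counting case via lemA
          set CV : Finset (Submodule (F i) (d i).Vgrp) :=
            (C.filter (fun I => idx I = i)).image (d i).psi with hCVdef
          have hCVprop : ∀ W ∈ CV, W ≠ ⊤ := by
            intro W hW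
            obtain ⟨I, hIf, rfl⟩ := Finset.mem_image.mp hW
            obtain ⟨hIC, hidx⟩ := Finset.mem_filter.mp hIf
            obtain ⟨hwJ, hwe, hwI⟩ := hw I hIC
            rw [hidx] at hwe
            intro htop
            have hmem : (⟨w I, hwJ, hwe⟩ : (d i).Vgrp) ∈ (d i).psi I := by
              rw [htop]; exact Submodule.mem_top
            exact hwI hmem
          have hCVcard : CV.card ≤ Fintype.card (F i) := by
            calc CV.card ≤ (C.filter (fun I => idx I = i)).card := Finset.card_image_le
              _ ≤ C.card := Finset.card_filter_le _ _
              _ = k := hCcard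
              _ ≤ _ := hk
              _ ≤ Fintype.card (F i) := hqle i hlam
          obtain ⟨v', hv'⟩ := lemA CV hCVprop hCVcard
          refine ⟨↑v', v'.2.1, v'.2.2, ?_⟩
          intro I hIC hidx hmem
          exact hv' ((d i).psi I)
            (Finset.mem_image_of_mem _ (Finset.mem_filter.mpr ⟨hIC, hidx⟩)) hmem
        · -- degenerate case: the component is at most one-dimensional
          obtain ⟨I₀, hI₀C, hidx₀⟩ := hex2
          obtain ⟨hw₀J, hw₀e, hw₀I⟩ := hw I₀ hI₀C
          rw [hidx₀] at hw₀e
          refine ⟨w I₀, hw₀J, hw₀e, ?_⟩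
          intro I hIC hidx hmem
          obtain ⟨hw₁J, hw₁e, hw₁I⟩ := hw I hIC
          rw [hidx] at hw₁e
          apply hw₁I
          by_cases hc : ∃ s ∈ S, w I = s * w I₀
          · obtain ⟨s, hs, hEq⟩ := hc
            rw [hEq]
            exact I.mul_mem_left _ hmem
          · push_neg at hc
            have h2 : ¬ (∀ s ∈ S, w I₀ ≠ s * w I) := by
              intro hall
              exact hlam ⟨w I₀, w I, hw₀J, hw₁J, by rw [he' i]; exact hw₀e,
                by rw [he' i]; exact hw₁e, hc, hall⟩
            push_neg at h2
            obtain ⟨s, hsS, hEq⟩ := h2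
            set a : F i := iso ⟨s, hsS⟩ i with hadef
            have ha : w I₀ = σf i a * w I := by
              calc w I₀ = s * w I := hEq
                _ = s * (σf i 1 * w I) := by rw [hw₁e]
                _ = (σf i 1 * s) * w I := by ring
                _ = σf i a * w I := by rw [hes0 i ⟨s, hsS⟩]
            by_cases ha0 : a = 0
            · exfalso
              apply hw₀I
              have hz0 : σf i 0 = 0 := (d i).map_zero
              rw [ha, ha0, hz0, zero_mul]
              exact I₀.zero_mem
            · have hwI1 : w I = σf i a⁻¹ * w I₀ := by
                calc w I = σf i 1 * w I := hw₁e.symm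
                  _ = σf i (a⁻¹ * a) * w I := by rw [inv_mul_cancel₀ ha0]
                  _ = σf i a⁻¹ * (σf i a * w I) := by rw [hmulσ, mul_assoc]
                  _ = σf i a⁻¹ * w I₀ := by rw [← ha]
              rw [hwI1]
              exact I.mul_mem_left _ hmem
      · exact ⟨0, J.zero_mem, mul_zero _, fun I hIC hidx _ => hex2 ⟨I, hIC, hidx⟩⟩
    choose v hv1 hv2 hv3 using key
    have hvJ : ∑ i : Fin n, v i ∈ J := Ideal.sum_mem J (fun i _ => hv1 i)
    obtain ⟨I, hIC, hmem⟩ := hCcov _ hvJ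
    have hproj : σf (idx I) 1 * (∑ i : Fin n, v i) = v (idx I) := by
      rw [Finset.mul_sum]
      rw [Finset.sum_eq_single (idx I)]
      · exact hv2 _
      · intro j _ hj
        rw [← hv2 j, ← mul_assoc, horth _ _ (Ne.symm hj), zero_mul]
      · intro h
        exact absurd (Finset.mem_univ _) h
    exact hv3 (idx I) I hIC rfl (hproj ▸ I.mul_mem_left (σf (idx I) 1) hmem)
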